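/- If L is a proper selfdual Lagrangian on X × X* and φ is a convex continuous function on X, then M(x,p) = inf{L(x, p − r) + φ(x) + φ*(r) : r ∈ X*} is also a selfdual Lagrangian on X × X*. -/

import Mathlib

open NormedSpace

/-- Legendre transform of a Lagrangian in both variables. -/
noncomputable def LagConj {X : Type*} [NormedAddCommGroup X] [NormedSpace ℝ X]
    (L : X × StrongDual ℝ X → EReal) (p : StrongDual ℝ X) (u : X) : EReal :=
  ⨆ yq : X × StrongDual ℝ X, (((p yq.1) + (yq.2 u) : ℝ) : EReal) - L yq

/-- Legendre conjugate of a function `φ : X → ℝ` on the dual. -/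
noncomputable def FnConj {X : Type*} [NormedAddCommGroup X] [NormedSpace ℝ X]
    (φ : X → ℝ) (r : StrongDual ℝ X) : EReal :=
  ⨆ x : X, ((r x - φ x : ℝ) : EReal)

namespace Stmt5Aux

/-! ### EReal helper lemmas -/

lemma ereal_sub_add_sub (a b : ℝ) {A B : EReal} (hA : A ≠ ⊥) (hB : B ≠ ⊥) :
    ((a : EReal) - A) + ((b : EReal) - B) = (((a + b : ℝ) : EReal)) - (A + B) := by
  induction A with
  | bot => exact absurd rfl hA
  | top =>
    rw [EReal.sub_top, EReal.bot_add, EReal.top_add_of_ne_bot hB, EReal.sub_top]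
  | coe A' =>
    induction B with
    | bot => exact absurd rfl hB
    | top =>
      rw [EReal.sub_top, EReal.add_bot, EReal.add_top_of_ne_bot (EReal.coe_ne_bot A'),
        EReal.sub_top]
    | coe B' =>
      rw [← EReal.coe_sub, ← EReal.coe_sub, ← EReal.coe_add, ← EReal.coe_add, ← EReal.coe_sub]
      norm_cast
      ring

lemma le_iInf_add_iInf {ι κ : Sort*} [Nonempty ι] [Nonempty κ] {f : ι → EReal} {g : κ → EReal}
    {c : EReal} (hA : (⨅ i, f i) ≠ ⊥) (hB : (⨅ j, g j) ≠ ⊥)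
    (h : ∀ i j, c ≤ f i + g j) : c ≤ (⨅ i, f i) + ⨅ j, g j := by
  refine EReal.le_add_of_forall_gt (Or.inl hA) (Or.inr hB) fun a' ha' b' hb' => ?_
  obtain ⟨i, hi⟩ := iInf_lt_iff.1 ha'
  obtain ⟨j, hj⟩ := iInf_lt_iff.1 hb'
  exact (h i j).trans (add_le_add hi.le hj.le)

lemma iSup_add_iSup_le {ι κ : Sort*} {f : ι → EReal} {g : κ → EReal} {c : EReal}
    (h : ∀ i j, f i + g j ≤ c) : (⨆ i, f i) + (⨆ j, g j) ≤ c := by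
  refine EReal.add_le_of_forall_lt fun a' ha' b' hb' => ?_
  obtain ⟨i, hi⟩ := lt_iSup_iff.1 ha'
  obtain ⟨j, hj⟩ := lt_iSup_iff.1 hb'
  exact (add_le_add hi.le hj.le).trans (h i j)

variable {X : Type*} [NormedAddCommGroup X] [NormedSpace ℝ X]

/-! ### Basic facts about `L`, `FnConj`, `M` -/

lemma pair_le_L_add_L {L : X × StrongDual ℝ X → EReal} (hbot : ∀ z, L z ≠ ⊥)
    (hself : ∀ x p, LagConj L p x = L (x, p)) (x y : X) (s t : StrongDual ℝ X) :
    ((s y + t x : ℝ) : EReal) ≤ L (x, s) + L (y, t) := by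
  have h1 : ((s y + t x : ℝ) : EReal) - L (y, t) ≤ L (x, s) := by
    rw [← hself x s]
    simp only [LagConj]
    exact le_iSup (fun yq : X × StrongDual ℝ X => ((s yq.1 + yq.2 x : ℝ) : EReal) - L yq) (y, t)
  exact (EReal.sub_le_iff_le_add (Or.inl (hbot (y, t))) (Or.inr (hbot (x, s)))).1 h1

lemma pair_le_L {L : X × StrongDual ℝ X → EReal} (hbot : ∀ z, L z ≠ ⊥)
    (hself : ∀ x p, LagConj L p x = L (x, p)) (z : X × StrongDual ℝ X) :
    ((z.2 z.1 : ℝ) : EReal) ≤ L z := by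
  have h := pair_le_L_add_L hbot hself z.1 z.1 z.2 z.2
  rw [Prod.mk.eta] at h
  by_cases ht : L z = ⊤
  · rw [ht]; exact le_top
  · obtain ⟨l, hl⟩ : ∃ l : ℝ, L z = (l : EReal) :=
      ⟨(L z).toReal, (EReal.coe_toReal ht (hbot z)).symm⟩
    rw [hl] at h ⊢
    rw [← EReal.coe_add] at h
    have := EReal.coe_le_coe_iff.1 h
    exact EReal.coe_le_coe_iff.2 (by linarith)

lemma le_FnConj (φ : X → ℝ) (r : StrongDual ℝ X) (y : X) :
    ((r y - φ y : ℝ) : EReal) ≤ FnConj φ r := by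
  simp only [FnConj]
  exact le_iSup (fun x : X => ((r x - φ x : ℝ) : EReal)) y

lemma FnConj_ne_bot (φ : X → ℝ) (r : StrongDual ℝ X) : FnConj φ r ≠ ⊥ :=
  ((EReal.bot_lt_coe _).trans_le (le_FnConj φ r 0)).ne'

lemma pair_le_Minf {L : X × StrongDual ℝ X → EReal} (hbot : ∀ z, L z ≠ ⊥)
    (hself : ∀ x p, LagConj L p x = L (x, p)) (φ : X → ℝ) (y : X) (q : StrongDual ℝ X) :
    ((q y : ℝ) : EReal) ≤ ⨅ r : StrongDual ℝ X, L (y, q - r) + ((φ y : ℝ) : EReal) + FnConj φ r := by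
  refine le_iInf fun r => ?_
  have h1 : (((q - r) y : ℝ) : EReal) ≤ L (y, q - r) := pair_le_L hbot hself (y, q - r)
  have h2 := le_FnConj φ r y
  have hcoe : ((q y : ℝ) : EReal)
      = (((q - r) y : ℝ) : EReal) + ((φ y : ℝ) : EReal) + ((r y - φ y : ℝ) : EReal) := by
    rw [← EReal.coe_add, ← EReal.coe_add]
    refine EReal.coe_eq_coe_iff.2 ?_
    rw [ContinuousLinearMap.sub_apply]
    ring
  rw [hcoe]
  exact add_le_add (add_le_add h1 le_rfl) h2

/-! ### Miscellaneous dual space facts -/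

lemma forall_dual_le_imp_zero [CompleteSpace X] (w : X) (K : ℝ)
    (h : ∀ s : StrongDual ℝ X, s w ≤ K) : w = 0 := by
  have h0 : ∀ s : StrongDual ℝ X, s w = 0 := by
    intro s
    by_contra hs
    have h1 := h (((K + 1) / s w) • s)
    rw [ContinuousLinearMap.smul_apply, smul_eq_mul, div_mul_cancel₀ _ hs] at h1
    linarith
  exact NormedSpace.eq_zero_of_forall_dual_eq_zero ℝ h0

lemma dual_decomp (hrefl : Function.Surjective (inclusionInDoubleDual ℝ X))
    (u : (X × StrongDual ℝ X) →L[ℝ] ℝ) :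
    ∃ (r : StrongDual ℝ X) (v : X), ∀ (y : X) (s : StrongDual ℝ X), u (y, s) = r y + s v := by
  obtain ⟨v, hv⟩ := hrefl (u.comp (ContinuousLinearMap.inr ℝ X (StrongDual ℝ X)))
  refine ⟨u.comp (ContinuousLinearMap.inl ℝ X (StrongDual ℝ X)), v, fun y s => ?_⟩
  have h1 : ((y, s) : X × StrongDual ℝ X) = (y, (0 : StrongDual ℝ X)) + ((0 : X), s) := by simp
  rw [h1, map_add]
  congr 1
  have h2 : inclusionInDoubleDual ℝ X v s
      = (u.comp (ContinuousLinearMap.inr ℝ X (StrongDual ℝ X))) s := by rw [hv]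
  rw [NormedSpace.dual_def] at h2
  simpa using h2.symm

/-! ### Biconjugate inequality (Fenchel–Moreau, one direction via Hahn–Banach) -/

lemma le_biconj (φ : X → ℝ) (hφconv : ConvexOn ℝ Set.univ φ) (hφcont : Continuous φ) (x : X) :
    ((φ x : ℝ) : EReal) ≤ ⨆ r : StrongDual ℝ X, ((r x : ℝ) : EReal) - FnConj φ r := by
  by_contra hU
  push_neg at hU
  obtain ⟨m, hUm, hmφ⟩ := EReal.exists_between_coe_real hU
  have hmlt : m < φ x := EReal.coe_lt_coe_iff.1 hmφ
  have hconv : Convex ℝ {w : X × ℝ | φ w.1 ≤ w.2} := by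
    have h := hφconv.convex_epigraph
    convert h using 1
    ext w
    simp
  have hclosed : IsClosed {w : X × ℝ | φ w.1 ≤ w.2} :=
    isClosed_le (hφcont.comp continuous_fst) continuous_snd
  have hx : ((x, m) : X × ℝ) ∉ {w : X × ℝ | φ w.1 ≤ w.2} := by
    simp only [Set.mem_setOf_eq]
    linarith
  obtain ⟨F, u, hFs, hFx⟩ := geometric_hahn_banach_closed_point hconv hclosed hx
  set β := F ((0 : X), (1 : ℝ)) with hβdef
  have hF : ∀ (y : X) (t : ℝ), F (y, t) = F (y, 0) + t * β := by
    intro y t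
    have h1 : ((y, t) : X × ℝ) = (y, (0 : ℝ)) + t • ((0 : X), (1 : ℝ)) := by
      simp [Prod.ext_iff]
    rw [h1, map_add, map_smul, smul_eq_mul]
  have hβle : β ≤ 0 := by
    by_contra hβpos
    push_neg at hβpos
    set t := max (φ 0) ((u - F ((0 : X), (0 : ℝ))) / β) with htdef
    have h1 : F ((0 : X), t) < u :=
      hFs ((0 : X), t) (by simp only [Set.mem_setOf_eq]; exact le_max_left _ _)
    have h2 : u - F ((0 : X), (0 : ℝ)) ≤ t * β :=
      (div_le_iff₀ hβpos).1 (le_max_right _ _)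
    rw [hF 0 t] at h1
    linarith
  have hβ0 : β ≠ 0 := by
    intro h0
    have h1 : F (x, φ x) < u := hFs (x, φ x) (by simp only [Set.mem_setOf_eq]; exact le_rfl)
    have h2 := hFx
    rw [hF x m, h0, mul_zero, add_zero] at h2
    rw [hF x (φ x), h0, mul_zero, add_zero] at h1
    linarith
  have hβneg : β < 0 := lt_of_le_of_ne hβle hβ0
  set b := -β with hbdef
  have hbpos : 0 < b := by rw [hbdef]; linarith
  set h0 : StrongDual ℝ X := b⁻¹ • (F.comp (ContinuousLinearMap.inl ℝ X ℝ)) with hh0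
  have hr : ∀ y : X, h0 y = F (y, 0) / b := by
    intro y
    rw [hh0]
    simp [div_eq_inv_mul]
  have key1 : ∀ y : X, h0 y - φ y ≤ u / b := by
    intro y
    have h1 : F (y, 0) + φ y * β < u := by
      rw [← hF]; exact hFs (y, φ y) (by simp only [Set.mem_setOf_eq]; exact le_rfl)
    have h2 : F (y, 0) - φ y * b ≤ u := by
      rw [hbdef]; linarith
    rw [hr y]
    calc F (y, 0) / b - φ y = (F (y, 0) - φ y * b) / b := by field_simp
      _ ≤ u / b := by gcongr
  have key2 : FnConj φ h0 ≤ ((u / b : ℝ) : EReal) := by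
    simp only [FnConj]
    exact iSup_le fun y => EReal.coe_le_coe_iff.2 (key1 y)
  have key3 : m < h0 x - u / b := by
    have h2 := hFx
    rw [hF x m] at h2
    have hβb : β = -b := by rw [hbdef]; ring
    rw [hβb, mul_neg] at h2
    have h5 : m * b < F (x, 0) - u := by linarith
    have h6 : m < (F (x, 0) - u) / b := (lt_div_iff₀ hbpos).2 h5
    rw [hr x, ← sub_div]
    exact h6
  have hterm : ((m : ℝ) : EReal) < ((h0 x : ℝ) : EReal) - FnConj φ h0 := by
    calc ((m : ℝ) : EReal) < ((h0 x - u / b : ℝ) : EReal) := EReal.coe_lt_coe_iff.2 key3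
      _ = ((h0 x : ℝ) : EReal) - ((u / b : ℝ) : EReal) := EReal.coe_sub _ _
      _ ≤ ((h0 x : ℝ) : EReal) - FnConj φ h0 := EReal.sub_le_sub le_rfl key2
  have hlast : ((m : ℝ) : EReal) < ⨆ r : StrongDual ℝ X, ((r x : ℝ) : EReal) - FnConj φ r :=
    hterm.trans_le (le_iSup (fun r : StrongDual ℝ X => ((r x : ℝ) : EReal) - FnConj φ r) h0)
  exact absurd (hlast.trans hUm) (lt_irrefl _)

/-! ### The epigraph of `L` -/

lemma mem_epi_iff {L : X × StrongDual ℝ X → EReal} (hbot : ∀ z, L z ≠ ⊥)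
    (hself : ∀ x p, LagConj L p x = L (x, p)) (z : X × StrongDual ℝ X) (t : ℝ) :
    L z ≤ (t : EReal) ↔
      ∀ w : X × StrongDual ℝ X, L w ≠ ⊤ → z.2 w.1 + w.2 z.1 - (L w).toReal ≤ t := by
  have hz : L z = LagConj L z.2 z.1 := by rw [hself, Prod.mk.eta]
  rw [hz]
  simp only [LagConj]
  rw [iSup_le_iff]
  constructor
  · intro H w hw
    have h1 := H w
    obtain ⟨l, hl⟩ : ∃ l : ℝ, L w = (l : EReal) :=
      ⟨(L w).toReal, (EReal.coe_toReal hw (hbot w)).symm⟩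
    rw [hl, ← EReal.coe_sub] at h1
    rw [hl]
    simpa using EReal.coe_le_coe_iff.1 h1
  · intro H w
    by_cases hw : L w = ⊤
    · rw [hw, EReal.sub_top]; exact bot_le
    · obtain ⟨l, hl⟩ : ∃ l : ℝ, L w = (l : EReal) :=
        ⟨(L w).toReal, (EReal.coe_toReal hw (hbot w)).symm⟩
      have h1 := H w hw
      rw [hl] at h1 ⊢
      rw [← EReal.coe_sub]
      refine EReal.coe_le_coe_iff.2 ?_
      simpa using h1

lemma epi_convex {L : X × StrongDual ℝ X → EReal} (hbot : ∀ z, L z ≠ ⊥)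
    (hself : ∀ x p, LagConj L p x = L (x, p)) :
    Convex ℝ {w : (X × StrongDual ℝ X) × ℝ | L w.1 ≤ (w.2 : EReal)} := by
  intro a ha b hb θ₁ θ₂ h₁ h₂ hsum
  simp only [Set.mem_setOf_eq] at ha hb ⊢
  rw [mem_epi_iff hbot hself] at ha hb ⊢
  intro w hw
  have Ha := ha w hw
  have Hb := hb w hw
  have e2 : (θ₁ • a + θ₂ • b).2 = θ₁ * a.2 + θ₂ * b.2 := rfl
  have epair : (θ₁ • a + θ₂ • b).1.2 w.1 + w.2 ((θ₁ • a + θ₂ • b).1.1)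
      = θ₁ * (a.1.2 w.1 + w.2 a.1.1) + θ₂ * (b.1.2 w.1 + w.2 b.1.1) := by
    simp only [Prod.fst_add, Prod.snd_add, Prod.smul_fst, Prod.smul_snd,
      ContinuousLinearMap.add_apply, ContinuousLinearMap.coe_smul',
      Pi.smul_apply, map_add, map_smul, smul_eq_mul]
    ring
  rw [e2, epair]
  have hl : θ₁ * (L w).toReal + θ₂ * (L w).toReal = (L w).toReal := by
    rw [← add_mul, hsum, one_mul]
  have m1 := mul_le_mul_of_nonneg_left Ha h₁
  have m2 := mul_le_mul_of_nonneg_left Hb h₂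
  nlinarith [m1, m2, hl]

/-! ### The key duality inequality (Fenchel–Rockafellar via Hahn–Banach) -/

set_option maxHeartbeats 1000000 in
lemma claimB [CompleteSpace X] {L : X × StrongDual ℝ X → EReal} (hbot : ∀ z, L z ≠ ⊥)
    (htop : ∃ z, L z ≠ ⊤) (hself : ∀ x p, LagConj L p x = L (x, p))
    (hrefl : Function.Surjective (inclusionInDoubleDual ℝ X))
    (φ : X → ℝ) (hφconv : ConvexOn ℝ Set.univ φ) (hφcont : Continuous φ)
    (x : X) (p : StrongDual ℝ X) :
    (⨅ r : StrongDual ℝ X, L (x, p - r) + ((φ x : ℝ) : EReal) + FnConj φ r) ≤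
      (⨆ r : StrongDual ℝ X, ((r x : ℝ) : EReal) - FnConj φ r) +
      (⨆ z : X × StrongDual ℝ X, ((p z.1 + z.2 x : ℝ) : EReal) - (L z + ((φ z.1 : ℝ) : EReal))) := by
  set U := ⨆ r : StrongDual ℝ X, ((r x : ℝ) : EReal) - FnConj φ r with hUdef
  set V := ⨆ z : X × StrongDual ℝ X, ((p z.1 + z.2 x : ℝ) : EReal) - (L z + ((φ z.1 : ℝ) : EReal))
    with hVdef
  have hUφ : ((φ x : ℝ) : EReal) ≤ U := le_biconj φ hφconv hφcont x
  have hUbot : U ≠ ⊥ := ((EReal.bot_lt_coe _).trans_le hUφ).ne'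
  by_cases hVtop : V = ⊤
  · rw [hVtop, EReal.add_top_of_ne_bot hUbot]; exact le_top
  obtain ⟨z₀, hz₀⟩ := htop
  have hVbot : V ≠ ⊥ := by
    obtain ⟨l₀, hl₀⟩ : ∃ l : ℝ, L z₀ = (l : EReal) :=
      ⟨(L z₀).toReal, (EReal.coe_toReal hz₀ (hbot z₀)).symm⟩
    have h1 : ((p z₀.1 + z₀.2 x : ℝ) : EReal) - (L z₀ + ((φ z₀.1 : ℝ) : EReal)) ≤ V := by
      rw [hVdef]
      exact le_iSup (fun z : X × StrongDual ℝ X =>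
        ((p z.1 + z.2 x : ℝ) : EReal) - (L z + ((φ z.1 : ℝ) : EReal))) z₀
    rw [hl₀, ← EReal.coe_add, ← EReal.coe_sub] at h1
    intro h
    rw [h, le_bot_iff] at h1
    exact EReal.coe_ne_bot _ h1
  obtain ⟨α, hVα⟩ : ∃ α : ℝ, V = (α : EReal) := ⟨V.toReal, (EReal.coe_toReal hVtop hVbot).symm⟩
  set lf : (X × StrongDual ℝ X) →L[ℝ] ℝ :=
    p.comp (ContinuousLinearMap.fst ℝ X (StrongDual ℝ X)) +
      (inclusionInDoubleDual ℝ X x).comp (ContinuousLinearMap.snd ℝ X (StrongDual ℝ X)) with hlf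
  have hlfz : ∀ z : X × StrongDual ℝ X, lf z = p z.1 + z.2 x := by
    intro z
    rw [hlf]
    simp [NormedSpace.dual_def]
  set C : Set ((X × StrongDual ℝ X) × ℝ) := {w | w.2 < lf w.1 - φ w.1.1 - α} with hC
  have hCopen : IsOpen C := by
    apply isOpen_lt continuous_snd
    exact ((lf.continuous.comp continuous_fst).sub
      (hφcont.comp (continuous_fst.comp continuous_fst))).sub continuous_const
  have hCconv : Convex ℝ C := by
    intro w₁ hw₁ w₂ hw₂ θ₁ θ₂ hθ₁ hθ₂ hsum
    simp only [hC, Set.mem_setOf_eq] at hw₁ hw₂ ⊢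
    have e2 : (θ₁ • w₁ + θ₂ • w₂).2 = θ₁ * w₁.2 + θ₂ * w₂.2 := rfl
    have e3 : lf ((θ₁ • w₁ + θ₂ • w₂).1) = θ₁ * lf w₁.1 + θ₂ * lf w₂.1 := by
      simp only [Prod.fst_add, Prod.smul_fst, map_add, map_smul, smul_eq_mul]
    have e4 : φ ((θ₁ • w₁ + θ₂ • w₂).1.1) ≤ θ₁ * φ w₁.1.1 + θ₂ * φ w₂.1.1 := by
      have h := hφconv.2 (Set.mem_univ w₁.1.1) (Set.mem_univ w₂.1.1) hθ₁ hθ₂ hsum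
      simpa [smul_eq_mul] using h
    have hα : θ₁ * α + θ₂ * α = α := by rw [← add_mul, hsum, one_mul]
    have key : θ₁ * w₁.2 + θ₂ * w₂.2
        < θ₁ * lf w₁.1 + θ₂ * lf w₂.1 - (θ₁ * φ w₁.1.1 + θ₂ * φ w₂.1.1) - α := by
      rcases eq_or_lt_of_le hθ₁ with h0 | hpos
      · have h21 : θ₂ = 1 := by linarith
        rw [← h0, h21]
        simpa using hw₂
      · have m1 : θ₁ * w₁.2 < θ₁ * (lf w₁.1 - φ w₁.1.1 - α) := (mul_lt_mul_iff_right₀ hpos).2 hw₁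
        have m2 : θ₂ * w₂.2 ≤ θ₂ * (lf w₂.1 - φ w₂.1.1 - α) :=
          mul_le_mul_of_nonneg_left hw₂.le hθ₂
        nlinarith [m1, m2, hα]
    have final : θ₁ * lf w₁.1 + θ₂ * lf w₂.1 - (θ₁ * φ w₁.1.1 + θ₂ * φ w₂.1.1) - α
        ≤ lf ((θ₁ • w₁ + θ₂ • w₂).1) - φ ((θ₁ • w₁ + θ₂ • w₂).1.1) - α := by
      rw [e3]; linarith [e4]
    rw [e2]
    exact key.trans_le final
  set Epi : Set ((X × StrongDual ℝ X) × ℝ) := {w | L w.1 ≤ (w.2 : EReal)} with hEpi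
  have hEconv : Convex ℝ Epi := epi_convex hbot hself
  have hdisj : Disjoint C Epi := by
    rw [Set.disjoint_left]
    rintro ⟨z, t⟩ h1 h2
    simp only [hC, Set.mem_setOf_eq] at h1
    simp only [hEpi, Set.mem_setOf_eq] at h2
    have hterm : ((p z.1 + z.2 x : ℝ) : EReal) - (L z + ((φ z.1 : ℝ) : EReal)) ≤ (α : EReal) := by
      rw [← hVα, hVdef]
      exact le_iSup (fun z : X × StrongDual ℝ X =>
        ((p z.1 + z.2 x : ℝ) : EReal) - (L z + ((φ z.1 : ℝ) : EReal))) z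
    have h3 : L z + ((φ z.1 : ℝ) : EReal) ≤ ((t + φ z.1 : ℝ) : EReal) := by
      rw [EReal.coe_add]; exact add_le_add h2 le_rfl
    have h4 : ((p z.1 + z.2 x - (t + φ z.1) : ℝ) : EReal) ≤ (α : EReal) := by
      rw [EReal.coe_sub]
      exact (EReal.sub_le_sub le_rfl h3).trans hterm
    have h5 := EReal.coe_le_coe_iff.1 h4
    have h6 := hlfz z
    linarith
  obtain ⟨F, u, hFC, hFE⟩ := geometric_hahn_banach_open hCconv hCopen hEconv hdisj
  set β := F (((0 : X), (0 : StrongDual ℝ X)), (1 : ℝ)) with hβdef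
  have hF : ∀ (z : X × StrongDual ℝ X) (t : ℝ), F (z, t) = F (z, 0) + t * β := by
    intro z t
    have h1 : ((z, t) : (X × StrongDual ℝ X) × ℝ)
        = (z, (0 : ℝ)) + t • (((0 : X), (0 : StrongDual ℝ X)), (1 : ℝ)) := by
      simp [Prod.ext_iff]
    rw [h1, map_add, map_smul, smul_eq_mul, hβdef]
  have hβpos : 0 < β := by
    have hge : 0 ≤ β := by
      by_contra hneg
      push_neg at hneg
      set q := (u - F (((0 : X), (0 : StrongDual ℝ X)), (0 : ℝ))) / β with hq
      set t := min (lf ((0 : X), (0 : StrongDual ℝ X)) - φ (0 : X) - α - 1) q with ht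
      have hmem : ((((0 : X), (0 : StrongDual ℝ X)), t) : (X × StrongDual ℝ X) × ℝ) ∈ C := by
        simp only [hC, Set.mem_setOf_eq]
        have := min_le_left (lf ((0 : X), (0 : StrongDual ℝ X)) - φ (0 : X) - α - 1) q
        rw [ht]
        linarith
      have h1 := hFC _ hmem
      rw [hF] at h1
      have h3 : t ≤ q := min_le_right _ _
      have h4 := mul_le_mul_of_nonpos_right h3 hneg.le
      rw [hq, div_mul_cancel₀ _ hneg.ne] at h4
      linarith
    rcases hge.lt_or_eq with h | h
    · exact h
    · exfalso
      have h1 : ∀ z : X × StrongDual ℝ X, F (z, (0 : ℝ)) < u := by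
        intro z
        have hmem : ((z, lf z - φ z.1 - α - 1) : (X × StrongDual ℝ X) × ℝ) ∈ C := by
          simp only [hC, Set.mem_setOf_eq]
          linarith
        have h2 := hFC _ hmem
        rw [hF, ← h, mul_zero, add_zero] at h2
        exact h2
      have hmem₀ : ((z₀, (L z₀).toReal) : (X × StrongDual ℝ X) × ℝ) ∈ Epi := by
        simp only [hEpi, Set.mem_setOf_eq]
        exact EReal.le_coe_toReal hz₀
      have h2 := hFE _ hmem₀
      rw [hF, ← h, mul_zero, add_zero] at h2
      exact absurd h2 (not_le.2 (h1 z₀))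
  have star1 : ∀ z : X × StrongDual ℝ X, lf z - φ z.1 - α ≤ (u - F (z, 0)) / β := by
    intro z
    by_contra hcon
    push_neg at hcon
    set q := (u - F (z, (0 : ℝ))) / β with hq
    set t := (q + (lf z - φ z.1 - α)) / 2 with ht
    have htq : q < t := by rw [ht]; linarith
    have htτ : t < lf z - φ z.1 - α := by rw [ht]; linarith
    have hmem : ((z, t) : (X × StrongDual ℝ X) × ℝ) ∈ C := by
      simp only [hC, Set.mem_setOf_eq]; exact htτ
    have h1 := hFC _ hmem
    rw [hF] at h1
    have h3 : t < q := by
      rw [hq]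
      exact (lt_div_iff₀ hβpos).2 (by linarith)
    linarith
  have star2 : ∀ z : X × StrongDual ℝ X, (((u - F (z, 0)) / β : ℝ) : EReal) ≤ L z := by
    intro z
    by_cases hw : L z = ⊤
    · rw [hw]; exact le_top
    obtain ⟨l, hl⟩ : ∃ l : ℝ, L z = (l : EReal) :=
      ⟨(L z).toReal, (EReal.coe_toReal hw (hbot z)).symm⟩
    have hmem : ((z, l) : (X × StrongDual ℝ X) × ℝ) ∈ Epi := by
      simp only [hEpi, Set.mem_setOf_eq]; rw [hl]
    have h1 := hFE _ hmem
    rw [hF] at h1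
    rw [hl]
    refine EReal.coe_le_coe_iff.2 ?_
    rw [div_le_iff₀ hβpos]
    linarith
  obtain ⟨r₀, v, hrv⟩ :=
    dual_decomp hrefl (β⁻¹ • (F.comp (ContinuousLinearMap.inl ℝ (X × StrongDual ℝ X) ℝ)))
  have hu : ∀ z : X × StrongDual ℝ X, F (z, 0) / β = r₀ z.1 + z.2 v := by
    intro z
    have h1 := hrv z.1 z.2
    simp only [ContinuousLinearMap.smul_apply, ContinuousLinearMap.comp_apply,
      ContinuousLinearMap.inl_apply, smul_eq_mul, Prod.mk.eta] at h1
    rw [div_eq_inv_mul]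
    exact h1
  have hv : v = -x := by
    have hK : ∀ s : StrongDual ℝ X, s (x + v) ≤ u / β + α + φ 0 := by
      intro s
      have h1 := star1 ((0 : X), s)
      rw [hlfz] at h1
      have h2 : (u - F (((0 : X), s), 0)) / β = u / β - (r₀ 0 + s v) := by
        rw [sub_div, hu ((0 : X), s)]
      simp only [map_zero, zero_add] at h1 h2
      rw [h2] at h1
      rw [map_add]
      linarith
    have h0 := forall_dual_le_imp_zero (x + v) _ hK
    exact (neg_eq_of_add_eq_zero_right h0).symm
  have keyφ : FnConj φ (p + r₀) ≤ ((α + u / β : ℝ) : EReal) := by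
    simp only [FnConj]
    refine iSup_le fun y => EReal.coe_le_coe_iff.2 ?_
    have h1 := star1 (y, (0 : StrongDual ℝ X))
    rw [hlfz] at h1
    have h2 : (u - F ((y, (0 : StrongDual ℝ X)), 0)) / β = u / β - (r₀ y + (0 : StrongDual ℝ X) v) := by
      rw [sub_div, hu (y, (0 : StrongDual ℝ X))]
    simp only [ContinuousLinearMap.zero_apply, add_zero] at h1 h2
    rw [h2] at h1
    rw [ContinuousLinearMap.add_apply]
    linarith
  have keyL : L (x, -r₀) ≤ ((-(u / β) : ℝ) : EReal) := by
    rw [← hself x (-r₀)]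
    simp only [LagConj]
    refine iSup_le fun z => ?_
    have h1 := star2 z
    have h2 : ((-r₀) z.1 + z.2 x : ℝ) - (u - F (z, 0)) / β = -(u / β) := by
      have h3 : (u - F (z, 0)) / β = u / β - (r₀ z.1 + z.2 v) := by
        rw [sub_div, hu z]
      rw [h3, hv, map_neg]
      simp only [ContinuousLinearMap.neg_apply]
      ring
    calc (((-r₀) z.1 + z.2 x : ℝ) : EReal) - L z
        ≤ (((-r₀) z.1 + z.2 x : ℝ) : EReal) - (((u - F (z, 0)) / β : ℝ) : EReal) :=
          EReal.sub_le_sub le_rfl h1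
      _ = ((((-r₀) z.1 + z.2 x : ℝ) - (u - F (z, 0)) / β : ℝ) : EReal) := (EReal.coe_sub _ _).symm
      _ = ((-(u / β) : ℝ) : EReal) := by rw [h2]
  have hfin := iInf_le
    (fun r : StrongDual ℝ X => L (x, p - r) + ((φ x : ℝ) : EReal) + FnConj φ r) (p + r₀)
  have hpr : p - (p + r₀) = -r₀ := by abel
  rw [hpr] at hfin
  refine hfin.trans ?_
  calc L (x, -r₀) + ((φ x : ℝ) : EReal) + FnConj φ (p + r₀)
      ≤ ((-(u / β) : ℝ) : EReal) + ((φ x : ℝ) : EReal) + ((α + u / β : ℝ) : EReal) :=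
        add_le_add (add_le_add keyL le_rfl) keyφ
    _ = ((φ x : ℝ) : EReal) + (α : EReal) := by
        rw [← EReal.coe_add, ← EReal.coe_add, ← EReal.coe_add]
        exact EReal.coe_eq_coe_iff.2 (by ring)
    _ ≤ U + V := by rw [hVα]; exact add_le_add hUφ le_rfl

end Stmt5Aux

set_option maxHeartbeats 1000000 in
/-- If `L` is a proper selfdual Lagrangian and `φ` is convex and
continuous on `X`, then `M(x,p) = inf{L(x,p−r) + φ(x) + φ*(r) : r ∈ X*}` is also
a selfdual Lagrangian on `X × X*`. -/
theorem stmt5 {X : Type*} [NormedAddCommGroup X] [NormedSpace ℝ X] [CompleteSpace X]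
    (hrefl : Function.Surjective (NormedSpace.inclusionInDoubleDual ℝ X))
    (L : X × StrongDual ℝ X → EReal)
    (hproper : (∃ z, L z ≠ ⊤) ∧ ∀ z, L z ≠ ⊥)
    (hself : ∀ x p, LagConj L p x = L (x, p))
    (φ : X → ℝ) (hφconv : ConvexOn ℝ Set.univ φ) (hφcont : Continuous φ)
    (M : X × StrongDual ℝ X → EReal)
    (hM : ∀ x p, M (x, p) = ⨅ r : StrongDual ℝ X, L (x, p - r) + ((φ x : ℝ) : EReal) + FnConj φ r) :
    ∀ x p, LagConj M p x = M (x, p) := by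
  obtain ⟨htop, hbot⟩ := hproper
  intro x p
  apply le_antisymm
  · -- easy inequality : M* ≤ M
    simp only [LagConj]
    refine iSup_le fun yq => ?_
    obtain ⟨y, q⟩ := yq
    refine EReal.sub_le_of_le_add ?_
    rw [hM x p, hM y q]
    have hA : (⨅ r : StrongDual ℝ X, L (x, p - r) + ((φ x : ℝ) : EReal) + FnConj φ r) ≠ ⊥ :=
      ((EReal.bot_lt_coe _).trans_le (Stmt5Aux.pair_le_Minf hbot hself φ x p)).ne'
    have hB : (⨅ r : StrongDual ℝ X, L (y, q - r) + ((φ y : ℝ) : EReal) + FnConj φ r) ≠ ⊥ :=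
      ((EReal.bot_lt_coe _).trans_le (Stmt5Aux.pair_le_Minf hbot hself φ y q)).ne'
    refine Stmt5Aux.le_iInf_add_iInf hA hB fun r r' => ?_
    have hK := Stmt5Aux.pair_le_L_add_L hbot hself x y (p - r) (q - r')
    have h2 := Stmt5Aux.le_FnConj φ r y
    have h3 := Stmt5Aux.le_FnConj φ r' x
    have hre : (L (x, p - r) + ((φ x : ℝ) : EReal) + FnConj φ r)
          + (L (y, q - r') + ((φ y : ℝ) : EReal) + FnConj φ r')
        = (L (x, p - r) + L (y, q - r'))
          + (((φ x : ℝ) : EReal) + FnConj φ r' + (((φ y : ℝ) : EReal) + FnConj φ r)) := by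
      abel
    rw [hre]
    have hcoe : ((p y + q x : ℝ) : EReal)
        = (((p - r) y + (q - r') x : ℝ) : EReal)
          + (((φ x : ℝ) : EReal) + ((r' x - φ x : ℝ) : EReal)
            + (((φ y : ℝ) : EReal) + ((r y - φ y : ℝ) : EReal))) := by
      rw [← EReal.coe_add, ← EReal.coe_add, ← EReal.coe_add, ← EReal.coe_add]
      refine EReal.coe_eq_coe_iff.2 ?_
      rw [ContinuousLinearMap.sub_apply, ContinuousLinearMap.sub_apply]
      ring
    rw [hcoe]
    exact add_le_add hK (add_le_add (add_le_add le_rfl h3) (add_le_add le_rfl h2))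
  · -- hard inequality : M ≤ M*
    rw [hM x p]
    refine (Stmt5Aux.claimB hbot htop hself hrefl φ hφconv hφcont x p).trans ?_
    refine Stmt5Aux.iSup_add_iSup_le fun r z => ?_
    have hG : L z + ((φ z.1 : ℝ) : EReal) ≠ ⊥ := by
      rw [Ne, EReal.add_eq_bot_iff]
      push_neg
      exact ⟨hbot z, EReal.coe_ne_bot _⟩
    have hΦ : FnConj φ r ≠ ⊥ := Stmt5Aux.FnConj_ne_bot φ r
    rw [Stmt5Aux.ereal_sub_add_sub (r x) (p z.1 + z.2 x) hΦ hG]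
    have hMle : M (z.1, z.2 + r) ≤ FnConj φ r + (L z + ((φ z.1 : ℝ) : EReal)) := by
      rw [hM]
      refine (iInf_le _ r).trans ?_
      rw [add_sub_cancel_right, Prod.mk.eta]
      exact le_of_eq (by abel)
    have hS : ((p z.1 + (z.2 + r) x : ℝ) : EReal) - M (z.1, z.2 + r) ≤ LagConj M p x := by
      simp only [LagConj]
      exact le_iSup (fun yq : X × StrongDual ℝ X => ((p yq.1 + yq.2 x : ℝ) : EReal) - M yq) (z.1, z.2 + r)
    refine le_trans ?_ hS
    have harg : r x + (p z.1 + z.2 x) = p z.1 + (z.2 + r) x := by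
      rw [ContinuousLinearMap.add_apply]; ring
    rw [harg]
    exact EReal.sub_le_sub le_rfl hMle
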